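/- (Theorem 3: convex combination of update rules from different majorizers.) Let f : ℝ^M → ℝ, x₀ ∈ ℝ^M, and for q ∈ {1,…,Q} let g_q : ℝ^M → ℝ be convex with g_q(x) ≥ f(x) for all x and g_q(x₀) = f(x₀). Suppose the pointwise minimum x ↦ min_{q∈{1,…,Q}} g_q(x) is convex. For each q let x_{q,1},…,x_{q,S_q} ∈ ℝ^M satisfy g_q(x_{q,s}) ≤ g_q(x₀) for all s ∈ {1,…,S_q}, and let weights α_{q,s} ≥ 0 satisfy Σ_{q=1}^Q Σ_{s=1}^{S_q} α_{q,s} = 1 and Σ_{s=1}^{S_q} α_{q,s} > 0 for each q. Then f(Σ_{q=1}^Q Σ_{s=1}^{S_q} α_{q,s} x_{q,s}) ≤ f(x₀). -/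
import Mathlib


open Finset

/-- Theorem 3: convex combination of update rules from different
majorizers, assuming the pointwise minimum of the majorizers is convex. -/
theorem stmt12 {M Q : ℕ} (hQ : 0 < Q)
    (f : (Fin M → ℝ) → ℝ) (x₀ : Fin M → ℝ)
    (g : Fin Q → (Fin M → ℝ) → ℝ)
    (hconv : ∀ q, ConvexOn ℝ Set.univ (g q))
    (hmaj : ∀ q x, f x ≤ g q x) (htouch : ∀ q, g q x₀ = f x₀)
    (hminconv : ConvexOn ℝ Set.univ (fun x => ⨅ q, g q x))
    (S : Fin Q → ℕ)
    (x : (q : Fin Q) → Fin (S q) → (Fin M → ℝ))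
    (hdesc : ∀ q s, g q (x q s) ≤ g q x₀)
    (α : (q : Fin Q) → Fin (S q) → ℝ)
    (hα : ∀ q s, 0 ≤ α q s)
    (hsum : ∑ q, ∑ s, α q s = 1)
    (hpos : ∀ q, 0 < ∑ s, α q s) :
    f (∑ q, ∑ s, α q s • x q s) ≤ f x₀ := by
  haveI : Nonempty (Fin Q) := ⟨⟨0, hQ⟩⟩
  set h : (Fin M → ℝ) → ℝ := fun y => ⨅ q, g q y with hh
  have hf_le_h : ∀ y, f y ≤ h y := fun y => le_ciInf fun q => hmaj q y
  have hh_le_g : ∀ q y, h y ≤ g q y := fun q y =>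
    ciInf_le (Set.Finite.bddBelow (Set.finite_range _)) q
  -- rewrite double sums as sums over a sigma type
  have hsum' : ∑ p ∈ (univ : Finset (Fin Q)).sigma (fun q => (univ : Finset (Fin (S q)))),
      α p.1 p.2 = 1 := by rw [Finset.sum_sigma]; exact hsum
  have hz : ∑ q, ∑ s, α q s • x q s
      = ∑ p ∈ (univ : Finset (Fin Q)).sigma (fun q => (univ : Finset (Fin (S q)))),
        α p.1 p.2 • x p.1 p.2 := by rw [Finset.sum_sigma]
  calc f (∑ q, ∑ s, α q s • x q s)
      ≤ h (∑ q, ∑ s, α q s • x q s) := hf_le_h _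
    _ ≤ ∑ p ∈ (univ : Finset (Fin Q)).sigma (fun q => (univ : Finset (Fin (S q)))),
        α p.1 p.2 • h (x p.1 p.2) := by
        rw [hz]
        exact hminconv.map_sum_le (fun p _ => hα p.1 p.2) hsum'
          (fun p _ => Set.mem_univ _)
    _ ≤ ∑ p ∈ (univ : Finset (Fin Q)).sigma (fun q => (univ : Finset (Fin (S q)))),
        α p.1 p.2 • f x₀ := by
        refine Finset.sum_le_sum fun p _ => ?_
        have : h (x p.1 p.2) ≤ f x₀ := by
          calc h (x p.1 p.2) ≤ g p.1 (x p.1 p.2) := hh_le_g _ _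
            _ ≤ g p.1 x₀ := hdesc _ _
            _ = f x₀ := htouch _
        exact smul_le_smul_of_nonneg_left this (hα p.1 p.2)
    _ = f x₀ := by rw [← Finset.sum_smul, hsum', one_smul]
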